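/- Let k be a positive integer and let (z_n), (y_n) be defined by z_0 = 1, y_0 = 0, z_{n+1} = (16k²+1)z_n + 4k(16k²+2)y_n, y_{n+1} = (16k²+1)y_n + 4k·z_n. Then for every n ≥ 1, the integer z_{2n+1} + 8k² is not a perfect square. -/
import Mathlib

/-- The pair `(z n, y n)` of sequences with `z 0 = 1`, `y 0 = 0`,
`z (n+1) = (16k^2+1) * z n + 4k(16k^2+2) * y n` and `y (n+1) = (16k^2+1) * y n + 4k * z n`. -/
def zy (k : ℤ) : ℕ → ℤ × ℤ
  | 0 => (1, 0)
  | n + 1 =>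
    ((16 * k ^ 2 + 1) * (zy k n).1 + 4 * k * (16 * k ^ 2 + 2) * (zy k n).2,
     (16 * k ^ 2 + 1) * (zy k n).2 + 4 * k * (zy k n).1)

lemma zy1_succ (k : ℤ) (n : ℕ) :
    (zy k (n + 1)).1 = (16 * k ^ 2 + 1) * (zy k n).1 + 4 * k * (16 * k ^ 2 + 2) * (zy k n).2 :=
  rfl

lemma zy2_succ (k : ℤ) (n : ℕ) :
    (zy k (n + 1)).2 = (16 * k ^ 2 + 1) * (zy k n).2 + 4 * k * (zy k n).1 :=
  rfl

lemma zy_nonneg (k : ℤ) (hk : 0 < k) : ∀ n, 1 ≤ (zy k n).1 ∧ 0 ≤ (zy k n).2 := by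
  intro n
  induction n with
  | zero => simp [zy]
  | succ m ih =>
    obtain ⟨h1, h2⟩ := ih
    rw [zy1_succ, zy2_succ]
    have hz0 : (0:ℤ) ≤ (zy k m).1 := by linarith
    constructor <;>
      nlinarith [mul_nonneg (sq_nonneg k) hz0, mul_nonneg (sq_nonneg k) h2,
        mul_nonneg (mul_nonneg (mul_nonneg hk.le hk.le) hk.le) h2,
        mul_nonneg hk.le h2, mul_nonneg hk.le hz0]

lemma zy_pell (k : ℤ) : ∀ n, (zy k n).1 ^ 2 - (16 * k ^ 2 + 2) * (zy k n).2 ^ 2 = 1 := by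
  intro n
  induction n with
  | zero => simp [zy]
  | succ m ih =>
    rw [zy1_succ, zy2_succ]
    linear_combination ih

lemma zy_add (k : ℤ) (m : ℕ) : ∀ n,
    (zy k (m + n)).1
      = (zy k m).1 * (zy k n).1 + (16 * k ^ 2 + 2) * (zy k m).2 * (zy k n).2 ∧
    (zy k (m + n)).2 = (zy k m).1 * (zy k n).2 + (zy k m).2 * (zy k n).1 := by
  intro n
  induction n with
  | zero => simp [zy]
  | succ p ih =>
    obtain ⟨h1, h2⟩ := ih
    rw [Nat.add_succ, zy1_succ, zy2_succ, zy1_succ, zy2_succ, h1, h2]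
    constructor <;> ring

lemma zy_key (k : ℤ) (n : ℕ) :
    (zy k (2 * n + 1)).1 = ((zy k n).2 + (zy k (n + 1)).2) ^ 2 + 1 := by
  have h := (zy_add k n (n + 1)).1
  have e : 2 * n + 1 = n + (n + 1) := by ring
  rw [e, h, zy1_succ, zy2_succ]
  linear_combination zy_pell k n

lemma zy_grow (k : ℤ) (hk : 0 < k) : ∀ m, 128 * k ^ 3 ≤ (zy k (m + 2)).2 := by
  intro m
  induction m with
  | zero =>
    rw [zy2_succ, zy2_succ, zy1_succ]
    simp [zy]
    nlinarith
  | succ p ih =>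
    have h := zy_nonneg k hk (p + 2)
    rw [show p + 1 + 2 = (p + 2) + 1 from rfl, zy2_succ]
    nlinarith [h.1, h.2]

/-- For every `n ≥ 1`, the integer `z (2n+1) + 8k^2` is not a perfect square. -/
theorem stmt_10 (k : ℤ) (hk : 0 < k) (n : ℕ) (hn : 1 ≤ n) :
    ¬ ∃ x : ℤ, (zy k (2 * n + 1)).1 + 8 * k ^ 2 = x ^ 2 := by
  rintro ⟨x, hx⟩
  obtain ⟨j, rfl⟩ : ∃ j, n = j + 1 := ⟨n - 1, (Nat.succ_pred_eq_of_pos hn).symm⟩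
  rw [zy_key] at hx
  set s : ℤ := (zy k (j + 1)).2 + (zy k (j + 1 + 1)).2 with hs
  have hy1 : 0 ≤ (zy k (j + 1)).2 := (zy_nonneg k hk (j + 1)).2
  have hy2 : 128 * k ^ 3 ≤ (zy k (j + 1 + 1)).2 := by
    have := zy_grow k hk j
    simpa [show j + 2 = j + 1 + 1 from rfl] using this
  have hsl : 128 * k ^ 3 ≤ s := by simp only [hs]; linarith
  have hs0 : 0 ≤ s := by nlinarith
  -- from hx : s^2 + 1 + 8k^2 = x^2
  have hlt : s < |x| := by nlinarith [sq_abs x, abs_nonneg x]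
  have hle : s + 1 ≤ |x| := hlt
  have hsq : (s + 1) ^ 2 ≤ x ^ 2 := by nlinarith [sq_abs x, abs_nonneg x]
  nlinarith
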